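/- For m ≥ 2, n ≥ 2, and d a divisor of n, the SL(m, Z_n)-orbit of the vector (0,...,0,d) in (Z_n)^m has exactly J_m(n/d) = (n/d)^m ∏_{p | (n/d), p prime} (1 − p^{−m}) elements. -/

import Mathlib

open Matrix

open Finset in
theorem lemA (a b n : ℕ) (hn : n ≠ 0) (h : Nat.gcd (Nat.gcd a b) n = 1) :
    ∃ t : ℕ, Nat.Coprime (a + t * b) n := by
  classical
  refine ⟨∏ p ∈ n.primeFactors.filter (fun p => ¬ p ∣ a), p, ?_⟩
  set t := ∏ p ∈ n.primeFactors.filter (fun p => ¬ p ∣ a), p with ht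
  rw [Nat.coprime_iff_gcd_eq_one]
  by_contra hne
  obtain ⟨p, hp, hpd⟩ := Nat.exists_prime_and_dvd hne
  have hpx : p ∣ a + t * b := hpd.trans (Nat.gcd_dvd_left _ _)
  have hpn : p ∣ n := hpd.trans (Nat.gcd_dvd_right _ _)
  by_cases hpa : p ∣ a
  · have hptb : p ∣ t * b := by
      have := Nat.dvd_sub hpx hpa
      simpa using this
    rcases hp.dvd_mul.mp hptb with hpt | hpb
    · -- p ∣ t, but t's prime factors don't divide a, while p ∣ a
      rw [ht] at hpt
      rw [Prime.dvd_finset_prod_iff hp.prime] at hpt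
      obtain ⟨q, hq, hpq⟩ := hpt
      simp only [Finset.mem_filter, Nat.mem_primeFactors] at hq
      have : p = q := ((Nat.prime_dvd_prime_iff_eq hp hq.1.1).mp hpq)
      exact hq.2 (this ▸ hpa)
    · have : p ∣ 1 := h ▸ Nat.dvd_gcd (Nat.dvd_gcd hpa hpb) hpn
      exact hp.one_lt.ne' (Nat.dvd_one.mp this)
  · have hpt : p ∣ t := Finset.dvd_prod_of_mem _ (by
      simp [Nat.mem_primeFactors, hp, hpn, hpa, hn])
    have : p ∣ a := by
      have := Nat.dvd_sub hpx (hpt.mul_right b)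
      simpa using this
    exact hpa this

theorem bez {ι : Type*} [DecidableEq ι] (s : Finset ι) (f : ι → ℕ) :
    ∃ c : ι → ℤ, ∑ i ∈ s, c i * (f i : ℤ) = ((s.gcd f : ℕ) : ℤ) := by
  induction s using Finset.induction_on with
  | empty => exact ⟨0, by simp⟩
  | @insert a s ha ih =>
      obtain ⟨c, hc⟩ := ih
      refine ⟨Function.update (fun i => (f a).gcdB (s.gcd f) * c i) a ((f a).gcdA (s.gcd f)), ?_⟩
      rw [Finset.sum_insert ha, Function.update_self]
      rw [Finset.sum_congr rfl (fun i hi => by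
        rw [Function.update_of_ne (by rintro rfl; exact ha hi)])]
      have hg : (insert a s).gcd f = Nat.gcd (f a) (s.gcd f) := Finset.gcd_insert
      rw [hg]
      have hsum : ∑ i ∈ s, (f a).gcdB (s.gcd f) * c i * (f i : ℤ)
          = (f a).gcdB (s.gcd f) * ∑ i ∈ s, c i * (f i : ℤ) := by
        rw [Finset.mul_sum]; exact Finset.sum_congr rfl fun i _ => by ring
      rw [hsum, hc, Nat.gcd_eq_gcd_ab]
      ring

def Unimod {ι : Type*} [Fintype ι] {R : Type*} [CommRing R] (v : ι → R) : Prop :=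
  ∃ c : ι → R, ∑ i, c i * v i = 1

theorem unimod_map {ι : Type*} [Fintype ι] {R S : Type*} [CommRing R] [CommRing S]
    (f : R →+* S) {v : ι → R} (h : Unimod v) : Unimod (fun i => f (v i)) := by
  obtain ⟨c, hc⟩ := h
  exact ⟨fun i => f (c i), by rw [← _root_.map_one f, ← hc, map_sum]; simp⟩

theorem unimod_gcd {ι : Type*} [Fintype ι] {n : ℕ} [NeZero n] {v : ι → ZMod n}
    (h : Unimod v) : Nat.Coprime (Finset.univ.gcd fun i => (v i).val) n := by
  set D := Nat.gcd (Finset.univ.gcd fun i => (v i).val) n with hD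
  have hDn : D ∣ n := Nat.gcd_dvd_right _ _
  have hD0 : D ≠ 0 := fun h0 => NeZero.ne n (Nat.eq_zero_of_gcd_eq_zero_right h0)
  rw [Nat.Coprime, ← hD]
  by_contra hD1
  haveI : NeZero D := ⟨hD0⟩
  haveI : Fact (1 < D) := ⟨lt_of_le_of_ne (Nat.one_le_iff_ne_zero.mpr hD0) (Ne.symm hD1)⟩
  obtain ⟨c, hc⟩ := h
  have heq := congrArg (ZMod.castHom hDn (ZMod D)) hc
  rw [map_sum, _root_.map_one] at heq
  have hz : ∀ i, (ZMod.castHom hDn (ZMod D)) (v i) = 0 := by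
    intro i
    have hv : v i = ((v i).val : ZMod n) := (ZMod.natCast_rightInverse (v i)).symm
    have hdvd : D ∣ (v i).val :=
      (Nat.gcd_dvd_left _ _).trans (Finset.gcd_dvd (Finset.mem_univ i))
    rw [hv, map_natCast, ZMod.natCast_eq_zero_iff]
    exact hdvd
  rw [Finset.sum_congr rfl (fun i _ => by rw [_root_.map_mul, hz i, mul_zero])] at heq
  simp at heq

theorem gcd_unimod {ι : Type*} [Fintype ι] {n : ℕ} (W : ι → ℕ)
    (h : Nat.Coprime (Finset.univ.gcd W) n) : Unimod (fun i => (W i : ZMod n)) := by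
  classical
  obtain ⟨c, hc⟩ := bez Finset.univ W
  set g := Finset.univ.gcd W with hg
  have h1 : (1 : ℤ) = (g : ℤ) * g.gcdA n + (n : ℤ) * g.gcdB n := by
    have := Nat.gcd_eq_gcd_ab g n
    rw [h] at this
    exact_mod_cast this
  refine ⟨fun i => ((g.gcdA n * c i : ℤ) : ZMod n), ?_⟩
  have h2 : ∑ i, ((g.gcdA n * c i : ℤ) : ZMod n) * ((fun i => (W i : ZMod n)) i)
      = (((g.gcdA n) * ∑ i, c i * (W i : ℤ) : ℤ) : ZMod n) := by
    push_cast [Finset.mul_sum]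
    exact Finset.sum_congr rfl fun i _ => by ring
  rw [h2, hc]
  have h3 : (g.gcdA n * (g : ℤ)) = 1 - (n : ℤ) * g.gcdB n := by linarith [h1]
  rw [h3]
  push_cast
  simp [ZMod.natCast_self]

open Finset in
theorem compl_lemma {m n : ℕ} [NeZero n] [NeZero m] (hm : 2 ≤ m) (v : Fin m → ZMod n)
    (hv : Unimod v) :
    ∃ B : Matrix.SpecialLinearGroup (Fin m) (ZMod n),
      v ᵥ* (B : Matrix (Fin m) (Fin m) (ZMod n)) = Pi.single 0 1 := by
  set w : Fin m → ℕ := fun i => (v i).val with hw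
  have h1 : Nat.Coprime (Finset.univ.gcd w) n := unimod_gcd hv
  set G := ((Finset.univ.erase (0 : Fin m)).gcd w) with hG
  have huniv : Finset.univ.gcd w = Nat.gcd (w 0) G := by
    conv_lhs => rw [← Finset.insert_erase (Finset.mem_univ (0 : Fin m))]
    exact Finset.gcd_insert
  obtain ⟨t, hco⟩ := lemA (w 0) G n (NeZero.ne n) (by rw [← huniv]; exact h1)
  obtain ⟨c, hc⟩ := bez (Finset.univ.erase (0 : Fin m)) w
  -- the matrix E
  set E : Matrix (Fin m) (Fin m) (ZMod n) :=
    fun i j => if i = j then 1 else if j = 0 then (((t : ℤ) * c i : ℤ) : ZMod n) else 0 with hE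
  have detE : E.det = 1 := by
    rw [Matrix.det_of_lowerTriangular E (fun i j hij => by
      have hlt : i < j := hij
      simp only [hE]
      rw [if_neg (ne_of_lt hlt), if_neg (by
        rintro rfl
        exact absurd hlt (by simp [Fin.lt_def]))]
      )]
    simp [hE]
  have hvE0 : (v ᵥ* E) 0 = ((w 0 + t * G : ℕ) : ZMod n) := by
    rw [Matrix.vecMul, dotProduct]
    conv_lhs => rw [← Finset.insert_erase (Finset.mem_univ (0 : Fin m)),
      Finset.sum_insert (Finset.notMem_erase _ _)]
    have hE00 : E 0 0 = 1 := by simp [hE]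
    have hEi0 : ∀ i ∈ Finset.univ.erase (0 : Fin m), E i 0 = (((t : ℤ) * c i : ℤ) : ZMod n) := by
      intro i hi
      simp only [hE]
      rw [if_neg (Finset.ne_of_mem_erase hi)]
      simp
    rw [hE00, mul_one]
    rw [Finset.sum_congr rfl (fun i hi => by rw [hEi0 i hi])]
    have hvv : ∀ i, v i = (((w i : ℤ)) : ZMod n) := fun i => by
      push_cast
      exact (ZMod.natCast_rightInverse (v i)).symm
    rw [hvv 0]
    rw [Finset.sum_congr rfl (fun i _ => by rw [hvv i])]
    have : ∀ i ∈ Finset.univ.erase (0 : Fin m),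
        (((w i : ℤ)) : ZMod n) * (((t : ℤ) * c i : ℤ) : ZMod n)
          = (((w i : ℤ) * ((t : ℤ) * c i) : ℤ) : ZMod n) := by
      intro i _; push_cast; ring
    rw [Finset.sum_congr rfl this, ← Int.cast_sum, ← Int.cast_add]
    have : (w 0 : ℤ) + ∑ i ∈ Finset.univ.erase (0 : Fin m), (w i : ℤ) * ((t : ℤ) * c i)
        = ((w 0 + t * G : ℕ) : ℤ) := by
      push_cast
      rw [show ∑ i ∈ Finset.univ.erase (0 : Fin m), (w i : ℤ) * ((t : ℤ) * c i)
        = (t : ℤ) * ∑ i ∈ Finset.univ.erase (0 : Fin m), c i * (w i : ℤ) by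
          rw [Finset.mul_sum]; exact Finset.sum_congr rfl fun i _ => by ring]
      rw [hc, ← hG]
    rw [this]
    push_cast
    ring
  have hu : IsUnit ((v ᵥ* E) 0) := by
    rw [hvE0]
    exact (ZMod.isUnit_iff_coprime _ n).mpr hco
  set v' := v ᵥ* E with hv'
  set uu : (ZMod n)ˣ := hu.unit with huu
  have huv : (uu : ZMod n) = v' 0 := rfl
  -- the matrix F
  set F : Matrix (Fin m) (Fin m) (ZMod n) :=
    fun i j => if i = j then 1 else if i = 0 then -((uu⁻¹ : (ZMod n)ˣ) * v' j) else 0 with hF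
  have detF : F.det = 1 := by
    rw [Matrix.det_of_upperTriangular (M := F) (fun i j hij => by
      have hlt : j < i := hij
      simp only [hF]
      rw [if_neg (ne_of_gt hlt), if_neg (by
        rintro rfl
        exact absurd hlt (by simp [Fin.lt_def]))]
      )]
    simp [hF]
  have hvF : v' ᵥ* F = (Pi.single (0 : Fin m) ((uu : ZMod n)) : Fin m → ZMod n) := by
    funext j
    rw [Matrix.vecMul, dotProduct]
    conv_lhs => rw [← Finset.insert_erase (Finset.mem_univ (0 : Fin m)),
      Finset.sum_insert (Finset.notMem_erase _ _)]
    by_cases hj : j = 0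
    · subst hj
      have : ∀ i ∈ Finset.univ.erase (0 : Fin m), v' i * F i 0 = 0 := by
        intro i hi
        have hi0 : i ≠ 0 := Finset.ne_of_mem_erase hi
        simp [hF, hi0]
      rw [Finset.sum_congr rfl this]
      simp [hF, Pi.single_eq_same, huv]
    · have hF0j : F 0 j = -((uu⁻¹ : (ZMod n)ˣ) * v' j) := by
        simp [hF, Ne.symm hj]
      have : ∀ i ∈ Finset.univ.erase (0 : Fin m), v' i * F i j
          = if i = j then v' i else 0 := by
        intro i hi
        have hi0 : i ≠ 0 := Finset.ne_of_mem_erase hi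
        by_cases hij : i = j <;> simp [hF, hij, hi0]
      rw [Finset.sum_congr rfl this, Finset.sum_ite_eq' _ j]
      rw [if_pos (Finset.mem_erase.mpr ⟨hj, Finset.mem_univ j⟩)]
      rw [hF0j, Pi.single_eq_of_ne hj]
      have : v' 0 * -((uu⁻¹ : (ZMod n)ˣ) * v' j) = -(((uu : ZMod n) * (uu⁻¹ : (ZMod n)ˣ)) * v' j) := by
        rw [huv]; ring
      rw [this, Units.mul_inv]
      ring
  -- the matrix D
  set i1 : Fin m := ⟨1, by omega⟩ with hi1
  have h01 : (0 : Fin m) ≠ i1 := by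
    simp [hi1, Fin.ext_iff]
  set g : Fin m → ZMod n := fun i => if i = 0 then (uu⁻¹ : (ZMod n)ˣ) else if i = i1 then uu else 1
    with hg
  have detD : (Matrix.diagonal g).det = 1 := by
    rw [Matrix.det_diagonal]
    rw [← Finset.prod_subset (Finset.subset_univ ({0, i1} : Finset (Fin m)))
      (fun x _ hx => by
        simp only [Finset.mem_insert, Finset.mem_singleton, not_or] at hx
        simp [hg, hx.1, hx.2])]
    rw [Finset.prod_pair h01]
    simp [hg, Ne.symm h01]
  have hvD : (Pi.single (0 : Fin m) ((uu : ZMod n)) : Fin m → ZMod n) ᵥ* Matrix.diagonal g = (Pi.single (0 : Fin m) 1 : Fin m → ZMod n) := by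
    funext j
    rw [Matrix.vecMul_diagonal]
    by_cases hj : j = 0
    · subst hj
      simp [hg, Pi.single_eq_same]
    · rw [Pi.single_eq_of_ne hj, Pi.single_eq_of_ne hj, zero_mul]
  refine ⟨(show Matrix.SpecialLinearGroup (Fin m) (ZMod n) from ⟨E, detE⟩) * (show Matrix.SpecialLinearGroup (Fin m) (ZMod n) from ⟨F, detF⟩) * (show Matrix.SpecialLinearGroup (Fin m) (ZMod n) from ⟨Matrix.diagonal g, detD⟩), ?_⟩
  rw [Matrix.SpecialLinearGroup.coe_mul, Matrix.SpecialLinearGroup.coe_mul]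
  rw [← Matrix.vecMul_vecMul, ← Matrix.vecMul_vecMul]
  rw [← hv', hvF, hvD]

open Finset in
theorem lift_lemma {m k n : ℕ} [NeZero n] [NeZero m] (hk : k ∣ n) (u : Fin m → ZMod k)
    (hu : Unimod u) :
    ∃ r : Fin m → ZMod n, Unimod r ∧ ∀ i, ZMod.castHom hk (ZMod k) (r i) = u i := by
  haveI : NeZero k := ⟨fun h0 => NeZero.ne n (by simpa [h0] using hk)⟩
  set w : Fin m → ℕ := fun i => (u i).val with hw
  have h1 : Nat.Coprime (Finset.univ.gcd w) k := unimod_gcd hu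
  set G := ((Finset.univ.erase (0 : Fin m)).gcd w) with hG
  have huniv : Finset.univ.gcd w = Nat.gcd (w 0) G := by
    conv_lhs => rw [← Finset.insert_erase (Finset.mem_univ (0 : Fin m))]
    exact Finset.gcd_insert
  set M := Nat.gcd G n with hM
  have hM0 : M ≠ 0 := fun h0 => NeZero.ne n (Nat.eq_zero_of_gcd_eq_zero_right h0)
  have hhyp : Nat.gcd (Nat.gcd (w 0) k) M = 1 := by
    set D := Nat.gcd (Nat.gcd (w 0) k) M with hD
    have hDw0 : D ∣ w 0 := (Nat.gcd_dvd_left _ _).trans (Nat.gcd_dvd_left _ _)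
    have hDk : D ∣ k := (Nat.gcd_dvd_left _ _).trans (Nat.gcd_dvd_right _ _)
    have hDG : D ∣ G := (Nat.gcd_dvd_right _ _).trans (Nat.gcd_dvd_left _ _)
    have : D ∣ Nat.gcd (Finset.univ.gcd w) k := by
      rw [huniv]
      exact Nat.dvd_gcd (Nat.dvd_gcd hDw0 hDG) hDk
    rw [h1] at this
    exact Nat.dvd_one.mp this
  obtain ⟨t, hco⟩ := lemA (w 0) k M hM0 hhyp
  set W : Fin m → ℕ := fun i => if i = 0 then w 0 + t * k else w i with hW
  have hWgcd : Nat.Coprime (Finset.univ.gcd W) n := by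
    have hWuniv : Finset.univ.gcd W = Nat.gcd (w 0 + t * k) G := by
      conv_lhs => rw [← Finset.insert_erase (Finset.mem_univ (0 : Fin m))]
      rw [Finset.gcd_insert]
      have : ((Finset.univ.erase (0 : Fin m)).gcd W) = G := by
        rw [hG]
        exact Finset.gcd_congr rfl fun i hi => by
          simp [hW, Finset.ne_of_mem_erase hi]
      rw [this]
      simp only [hW, if_pos rfl]
      rfl
    rw [Nat.Coprime, hWuniv, Nat.gcd_assoc, ← hM]
    exact hco
  refine ⟨fun i => (W i : ZMod n), gcd_unimod W hWgcd, fun i => ?_⟩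
  rw [map_natCast]
  by_cases hi : i = 0
  · subst hi
    simp only [hW, if_pos rfl]
    push_cast
    rw [ZMod.natCast_self]
    rw [show ((w 0 : ZMod k)) = u 0 from ZMod.natCast_rightInverse (u 0)]
    ring
  · simp only [hW, if_neg hi]
    exact ZMod.natCast_rightInverse (u i)

noncomputable def Ncard (m k : ℕ) : ℕ := Nat.card {v : Fin m → ZMod k // Unimod v}

theorem ncard_one (m : ℕ) : Ncard m 1 = 1 := by
  rw [Ncard, Nat.card_eq_one_iff_unique]
  constructor
  · infer_instance
  · exact ⟨⟨fun _ => 0, ⟨0, Subsingleton.elim _ _⟩⟩⟩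

theorem unimod_prod {ι : Type*} [Fintype ι] {R S : Type*} [CommRing R] [CommRing S]
    {v : ι → R × S} : Unimod v ↔ Unimod (fun i => (v i).1) ∧ Unimod (fun i => (v i).2) := by
  constructor
  · intro h
    exact ⟨unimod_map (RingHom.fst R S) h, unimod_map (RingHom.snd R S) h⟩
  · rintro ⟨⟨c₁, hc₁⟩, ⟨c₂, hc₂⟩⟩
    refine ⟨fun i => (c₁ i, c₂ i), ?_⟩
    refine Prod.ext ?_ ?_ <;> simp [Prod.fst_sum, Prod.snd_sum, hc₁, hc₂]

theorem unimod_equiv {ι : Type*} [Fintype ι] {R S : Type*} [CommRing R] [CommRing S]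
    (e : R ≃+* S) {v : ι → R} : Unimod v ↔ Unimod (fun i => e (v i)) := by
  constructor
  · exact unimod_map e.toRingHom
  · intro h
    have := unimod_map e.symm.toRingHom h
    simpa using this

theorem ncard_mult (m : ℕ) {a b : ℕ} (hab : Nat.Coprime a b) :
    Ncard m (a * b) = Ncard m a * Ncard m b := by
  rw [Ncard, Ncard, Ncard, ← Nat.card_prod]
  apply Nat.card_congr
  have e := ZMod.chineseRemainder hab
  refine Equiv.trans (Equiv.subtypeEquiv (Equiv.piCongrRight fun _ => e.toEquiv)
    (fun v => unimod_equiv e)) ?_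
  exact {
    toFun := fun v => (⟨fun i => (v.1 i).1, (unimod_prod.mp v.2).1⟩,
      ⟨fun i => (v.1 i).2, (unimod_prod.mp v.2).2⟩)
    invFun := fun p => ⟨fun i => (p.1.1 i, p.2.1 i), unimod_prod.mpr ⟨p.1.2, p.2.2⟩⟩
    left_inv := fun v => Subtype.ext (funext fun i => rfl)
    right_inv := fun p => rfl }

-- over ZMod (p^e), unimodular iff some entry is a unit
theorem unimod_iff_exists_unit {ι : Type*} [Fintype ι] [DecidableEq ι] {p e : ℕ} (hp : p.Prime) (he : 0 < e)
    {v : ι → ZMod (p ^ e)} : Unimod v ↔ ∃ i, IsUnit (v i) := by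
  haveI : Fact p.Prime := ⟨hp⟩
  haveI : NeZero (p ^ e) := ⟨pow_ne_zero e hp.pos.ne'⟩
  constructor
  · intro h
    by_contra hno
    push_neg at hno
    have hdvd : ∀ i, p ∣ (v i).val := by
      intro i
      by_contra hpd
      exact hno i (by
        rw [show v i = (((v i).val : ℕ) : ZMod (p ^ e)) from (ZMod.natCast_rightInverse (v i)).symm]
        rw [ZMod.isUnit_iff_coprime]
        exact Nat.Coprime.pow_right e ((Nat.Prime.coprime_iff_not_dvd hp).mpr hpd).symm)
    have hpe : p ∣ p ^ e := dvd_pow_self p he.ne'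
    have h2 := unimod_map (ZMod.castHom hpe (ZMod p)) h
    obtain ⟨c, hc⟩ := h2
    have hz : ∀ i, (ZMod.castHom hpe (ZMod p)) (v i) = 0 := by
      intro i
      rw [show v i = (((v i).val : ℕ) : ZMod (p ^ e)) from (ZMod.natCast_rightInverse (v i)).symm]
      rw [map_natCast, ZMod.natCast_eq_zero_iff]
      exact hdvd i
    simp only [hz, mul_zero, Finset.sum_const_zero] at hc
    exact one_ne_zero hc.symm
  · rintro ⟨i, hi⟩
    refine ⟨Pi.single i ((hi.unit⁻¹ : _) : ZMod (p ^ e)), ?_⟩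
    rw [Finset.sum_eq_single i (fun j _ hj => by rw [Pi.single_eq_of_ne hj, zero_mul])
      (fun h => absurd (Finset.mem_univ i) h)]
    rw [Pi.single_eq_same]
    exact hi.val_inv_mul

-- equiv between units-subtype and units
noncomputable def isUnitEquivUnits {M : Type*} [Monoid M] : {x : M // IsUnit x} ≃ Mˣ where
  toFun x := x.2.unit
  invFun u := ⟨u, u.isUnit⟩
  left_inv x := Subtype.ext x.2.unit_spec
  right_inv u := Units.ext rfl

theorem ncard_prime_pow (m p e : ℕ) (hp : p.Prime) (he : 0 < e) :
    Ncard m (p ^ e) = (p ^ e) ^ m - (p ^ (e - 1)) ^ m := by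
  classical
  haveI : Fact p.Prime := ⟨hp⟩
  haveI : NeZero (p ^ e) := ⟨pow_ne_zero e hp.pos.ne'⟩
  rw [Ncard, Nat.card_eq_fintype_card]
  rw [Fintype.card_congr (Equiv.subtypeEquivRight
    (fun v => unimod_iff_exists_unit hp he (v := v)))]
  have hcompl := Fintype.card_subtype_compl (p := fun v : Fin m → ZMod (p ^ e) => ∃ i, IsUnit (v i))
  have hle : Fintype.card {v : Fin m → ZMod (p ^ e) // ∃ i, IsUnit (v i)}
      ≤ Fintype.card (Fin m → ZMod (p ^ e)) := Fintype.card_subtype_le _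
  have hq : Fintype.card (ZMod (p ^ e)) = p ^ e := ZMod.card _
  have hunits : Fintype.card {x : ZMod (p ^ e) // IsUnit x} = (p ^ e).totient := by
    rw [Fintype.card_congr isUnitEquivUnits]
    exact ZMod.card_units_eq_totient _
  have hnonunit : Fintype.card {x : ZMod (p ^ e) // ¬ IsUnit x} = p ^ (e - 1) := by
    rw [Fintype.card_subtype_compl, hq, hunits, Nat.totient_prime_pow hp he]
    have h1 : p ^ e = p ^ (e - 1) * p := by
      conv_lhs => rw [← Nat.succ_pred_eq_of_pos he]
      rw [pow_succ, Nat.pred_eq_sub_one]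
    rw [h1, ← Nat.mul_sub]
    rw [Nat.sub_sub_self hp.one_le, mul_one]
  have hnon : Fintype.card {v : Fin m → ZMod (p ^ e) // ¬ ∃ i, IsUnit (v i)}
      = (p ^ (e - 1)) ^ m := by
    rw [Fintype.card_congr ((Equiv.subtypeEquivRight (fun v => not_exists)).trans
      (Equiv.subtypePiEquivPi (p := fun (_ : Fin m) (x : ZMod (p ^ e)) => ¬ IsUnit x)))]
    rw [Fintype.card_pi]
    simp [hnonunit]
  have htot : Fintype.card (Fin m → ZMod (p ^ e)) = (p ^ e) ^ m := by
    rw [Fintype.card_fun, hq, Fintype.card_fin]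
  rw [htot] at hcompl hle
  calc Fintype.card {v : Fin m → ZMod (p ^ e) // ∃ i, IsUnit (v i)}
      = (p ^ e) ^ m - ((p ^ e) ^ m - Fintype.card {v : Fin m → ZMod (p ^ e) // ∃ i, IsUnit (v i)}) :=
        (Nat.sub_sub_self hle).symm
    _ = (p ^ e) ^ m - (p ^ (e - 1)) ^ m := by rw [← hcompl, hnon]

theorem ncard_val (m k : ℕ) (hk : k ≠ 0) :
    (Ncard m k : ℚ) = (k : ℚ) ^ m * ∏ p ∈ k.primeFactors, (1 - 1 / (p : ℚ) ^ m) := by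
  have hmf := Nat.multiplicative_factorization (Ncard m)
    (fun a b hab => ncard_mult m hab) (ncard_one m) hk
  rw [hmf, Finsupp.prod, Nat.support_factorization, Nat.cast_prod]
  have hfac : ∀ p ∈ k.primeFactors, ((Ncard m (p ^ k.factorization p) : ℕ) : ℚ)
      = ((p : ℚ) ^ k.factorization p) ^ m * (1 - 1 / (p : ℚ) ^ m) := by
    intro p hp
    have hpp : p.Prime := Nat.prime_of_mem_primeFactors hp
    have he : 0 < k.factorization p := Nat.Prime.factorization_pos_of_dvd hpp hk
      (Nat.dvd_of_mem_primeFactors hp)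
    set e := k.factorization p with he'
    rw [ncard_prime_pow m p e hpp he]
    have hle : (p ^ (e - 1)) ^ m ≤ (p ^ e) ^ m :=
      Nat.pow_le_pow_left (Nat.pow_le_pow_right hpp.pos (Nat.sub_le e 1)) m
    rw [Nat.cast_sub hle]
    push_cast
    have hp0 : (p : ℚ) ≠ 0 := Nat.cast_ne_zero.mpr hpp.pos.ne'
    have hpe : (p : ℚ) ^ e = (p : ℚ) ^ (e - 1) * p := by
      rw [← pow_succ]
      congr 1
      omega
    rw [hpe]
    field_simp
    ring
  rw [Finset.prod_congr rfl hfac, Finset.prod_mul_distrib, Finset.prod_pow]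
  congr 2
  have := Nat.factorization_prod_pow_eq_self hk
  calc ∏ p ∈ k.primeFactors, (p : ℚ) ^ k.factorization p
      = ((∏ p ∈ k.primeFactors, p ^ k.factorization p : ℕ) : ℚ) := by push_cast; rfl
    _ = (k : ℚ) := by
        rw [show ∏ p ∈ k.primeFactors, p ^ k.factorization p = k from by
          conv_rhs => rw [← this]
          rw [Finsupp.prod, Nat.support_factorization]]

theorem vec_single {m n : ℕ} [NeZero n] (i₀ : Fin m) (c : ZMod n)
    (M : Matrix (Fin m) (Fin m) (ZMod n)) :
    (Pi.single i₀ c) ᵥ* M = fun j => c * M i₀ j := by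
  funext j
  rw [Matrix.vecMul, dotProduct]
  rw [Finset.sum_eq_single i₀ (fun i _ hi => by rw [Pi.single_eq_of_ne hi, zero_mul])
    (fun h => absurd (Finset.mem_univ i₀) h)]
  rw [Pi.single_eq_same]


/-- For m ≥ 2, n ≥ 2 and d | n, the SL(m, Z_n)-orbit of (0,…,0,d) has exactly
J_m(n/d) = (n/d)^m · ∏_{p | n/d prime} (1 − p^{−m}) elements. -/
theorem orbit_card_eq_jordan (m n d : ℕ) (hn : 2 ≤ n) (hm : 2 ≤ m)
    (hd : d ∣ n) :
    (Set.ncard {a : Fin m → ZMod n |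
        ∃ A : Matrix.SpecialLinearGroup (Fin m) (ZMod n),
          vecMul (Pi.single (⟨m - 1, by omega⟩ : Fin m) ((d : ZMod n)))
            (A : Matrix (Fin m) (Fin m) (ZMod n)) = a} : ℚ)
      = ((n / d : ℕ) : ℚ) ^ m *
          ∏ p ∈ (n / d).primeFactors, (1 - 1 / (p : ℚ) ^ m) := by
  haveI : NeZero n := ⟨by omega⟩
  haveI : NeZero m := ⟨by omega⟩
  set k := n / d with hkdef
  set i₀ : Fin m := ⟨m - 1, by omega⟩ with hi₀
  have hdk : d * k = n := Nat.mul_div_cancel' hd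
  have hd0 : d ≠ 0 := by intro h0; rw [h0, zero_mul] at hdk; omega
  have hk0 : k ≠ 0 := by intro h0; rw [h0, mul_zero] at hdk; omega
  haveI : NeZero k := ⟨hk0⟩
  have hkn : k ∣ n := ⟨d, by rw [← hdk]; ring⟩
  -- the injection ψ : ZMod k → ZMod n
  set ψ : ZMod k → ZMod n := fun x => (d : ZMod n) * ((x.val : ℕ) : ZMod n) with hψ
  have psi_natCast : ∀ z : ℕ, ψ ((z : ZMod k)) = (d : ZMod n) * (z : ZMod n) := by
    intro z
    show (d : ZMod n) * ((((z : ZMod k)).val : ℕ) : ZMod n) = _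
    rw [ZMod.val_natCast]
    conv_rhs => rw [show (z : ℕ) = z % k + k * (z / k) from (Nat.mod_add_div z k).symm]
    have hzero : ((k * (z / k) : ℕ) : ZMod n) * (d : ZMod n) = 0 := by
      rw [show ((k * (z / k) : ℕ) : ZMod n) * (d : ZMod n)
          = ((k * (z / k) * d : ℕ) : ZMod n) by push_cast; ring]
      rw [show k * (z / k) * d = n * (z / k) by rw [← hdk]; ring]
      push_cast
      simp [ZMod.natCast_self]
    push_cast at hzero ⊢
    linear_combination -hzero
  have psi_inj : Function.Injective ψ := by
    intro x y hxy
    rw [hψ] at hxy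
    simp only at hxy
    have h1 : ((d * x.val : ℕ) : ZMod n) = ((d * y.val : ℕ) : ZMod n) := by
      push_cast
      exact hxy
    rw [ZMod.natCast_eq_natCast_iff] at h1
    rw [← hdk] at h1
    have h2 : x.val ≡ y.val [MOD k] := Nat.ModEq.mul_left_cancel' hd0 h1
    have h3 : x.val = y.val := by
      rw [Nat.ModEq] at h2
      rwa [Nat.mod_eq_of_lt (ZMod.val_lt x), Nat.mod_eq_of_lt (ZMod.val_lt y)] at h2
    exact ZMod.val_injective k h3
  have psi_cast : ∀ x : ZMod n, ψ (ZMod.castHom hkn (ZMod k) x) = (d : ZMod n) * x := by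
    intro x
    have h1 : ((x.val : ℕ) : ZMod n) = x := ZMod.natCast_rightInverse x
    calc ψ (ZMod.castHom hkn (ZMod k) x)
        = ψ (ZMod.castHom hkn (ZMod k) ((x.val : ℕ) : ZMod n)) := by rw [h1]
      _ = ψ ((x.val : ℕ) : ZMod k) := by rw [map_natCast]
      _ = (d : ZMod n) * ((x.val : ℕ) : ZMod n) := psi_natCast _
      _ = (d : ZMod n) * x := by rw [h1]
  -- the set equality
  have hset : {a : Fin m → ZMod n |
        ∃ A : Matrix.SpecialLinearGroup (Fin m) (ZMod n),
          vecMul (Pi.single i₀ ((d : ZMod n)))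
            (A : Matrix (Fin m) (Fin m) (ZMod n)) = a}
      = (fun u : Fin m → ZMod k => ψ ∘ u) '' {u : Fin m → ZMod k | Unimod u} := by
    ext a
    constructor
    · rintro ⟨A, rfl⟩
      set r : Fin m → ZMod n := fun j => (A : Matrix (Fin m) (Fin m) (ZMod n)) i₀ j with hr
      have hrU : Unimod r := by
        refine ⟨fun j => (A : Matrix (Fin m) (Fin m) (ZMod n)).adjugate j i₀, ?_⟩
        have h3 : (A : Matrix (Fin m) (Fin m) (ZMod n))
            * (A : Matrix (Fin m) (Fin m) (ZMod n)).adjugate = 1 := by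
          rw [Matrix.mul_adjugate, A.2, one_smul]
        have h2 := congrFun (congrFun h3 i₀) i₀
        rw [Matrix.mul_apply, Matrix.one_apply_eq] at h2
        exact (Finset.sum_congr rfl fun j _ => mul_comm _ _).trans h2
      refine ⟨fun i => ZMod.castHom hkn (ZMod k) (r i), unimod_map _ hrU, ?_⟩
      funext j
      simp only [Function.comp_apply]
      rw [psi_cast]
      rw [_root_.vec_single]
    · rintro ⟨u, huU, rfl⟩
      obtain ⟨r, hrU, hru⟩ := lift_lemma hkn u huU
      obtain ⟨B, hB⟩ := compl_lemma hm r hrU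
      have hδU : Unimod (Pi.single i₀ (1 : ZMod n)) := by
        refine ⟨Pi.single i₀ 1, ?_⟩
        rw [Finset.sum_eq_single i₀ (fun i _ hi => by rw [Pi.single_eq_of_ne hi, zero_mul])
          (fun h => absurd (Finset.mem_univ i₀) h)]
        simp
      obtain ⟨B₀, hB₀⟩ := compl_lemma hm (Pi.single i₀ (1 : ZMod n)) hδU
      refine ⟨B₀ * B⁻¹, ?_⟩
      have hrow : (Pi.single i₀ (1 : ZMod n)) ᵥ* ((B₀ * B⁻¹ : Matrix.SpecialLinearGroup (Fin m) (ZMod n)) : Matrix (Fin m) (Fin m) (ZMod n)) = r := by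
        rw [Matrix.SpecialLinearGroup.coe_mul, ← Matrix.vecMul_vecMul, hB₀, ← hB,
          Matrix.vecMul_vecMul, ← Matrix.SpecialLinearGroup.coe_mul, mul_inv_cancel,
          Matrix.SpecialLinearGroup.coe_one, Matrix.vecMul_one]
      funext j
      have h1 : (Pi.single i₀ ((d : ZMod n))) ᵥ* ((B₀ * B⁻¹ : Matrix.SpecialLinearGroup (Fin m) (ZMod n)) : Matrix (Fin m) (Fin m) (ZMod n))
          = fun j => (d : ZMod n) * ((Pi.single i₀ (1 : ZMod n)) ᵥ* ((B₀ * B⁻¹ : Matrix.SpecialLinearGroup (Fin m) (ZMod n)) : Matrix (Fin m) (Fin m) (ZMod n))) j := by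
        rw [_root_.vec_single, _root_.vec_single]
        funext j'
        simp
      rw [h1, hrow]
      simp only [Function.comp_apply]
      rw [← hru j, psi_cast]
  rw [hset]
  have hinj : Function.Injective (fun u : Fin m → ZMod k => ψ ∘ u) := by
    intro u u' huu'
    funext i
    exact psi_inj (congrFun huu' i)
  rw [Set.ncard_image_of_injective _ hinj]
  have hcard : ({u : Fin m → ZMod k | Unimod u}).ncard = Ncard m k := by
    rw [← Nat.card_coe_set_eq]
    rfl
  rw [hcard, ncard_val m k hk0]
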